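/- Let A ∈ ℝ^{n×n} be positive semidefinite and X ∈ ℝ^{n×ℓ}. The Nyström approximation A⟨X⟩ := (AX)(Xᵀ A X)†(AX)ᵀ satisfies A⟨X⟩ = A^{1/2} P A^{1/2}, where P is the orthogonal projector onto the range of A^{1/2} X. Consequently the Nyström error A − A⟨X⟩ is positive semidefinite. -/

import Mathlib

open Matrix

/-- The Moore–Penrose pseudoinverse of a real matrix: the (unique) matrix satisfying
the four Penrose conditions. -/
noncomputable def pinv {m n : ℕ} (A : Matrix (Fin m) (Fin n) ℝ) :
    Matrix (Fin n) (Fin m) ℝ :=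
  letI := Classical.propDecidable
  if h : ∃ B : Matrix (Fin n) (Fin m) ℝ,
      (A * B)ᵀ = A * B ∧ (B * A)ᵀ = B * A ∧ A * B * A = A ∧ B * A * B = B
  then h.choose else 0

/-- The PSD square root of a positive semidefinite matrix (the definition
`Matrix.PosSemidef.sqrt` of the older Mathlib, since removed). -/
noncomputable def Matrix.PosSemidef.sqrt {n : Type*} [Fintype n] [DecidableEq n]
    {A : Matrix n n ℝ} (hA : A.PosSemidef) : Matrix n n ℝ :=
  (hA.1.eigenvectorUnitary : Matrix n n ℝ) * diagonal ((↑) ∘ (√·) ∘ hA.1.eigenvalues) *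
    (star hA.1.eigenvectorUnitary : Matrix n n ℝ)

/-- `S * pinv (Sᵀ S) * Sᵀ` is a symmetric idempotent. -/
theorem proj_symm_idem {n ℓ : ℕ} (S : Matrix (Fin n) (Fin ℓ) ℝ) :
    (S * pinv (Sᵀ * S) * Sᵀ)ᵀ = S * pinv (Sᵀ * S) * Sᵀ ∧
    (S * pinv (Sᵀ * S) * Sᵀ) * (S * pinv (Sᵀ * S) * Sᵀ) = S * pinv (Sᵀ * S) * Sᵀ := by
  classical
  set B := pinv (Sᵀ * S) with hBdef
  set P := S * B * Sᵀ with hPdef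
  by_cases h : ∃ C : Matrix (Fin ℓ) (Fin ℓ) ℝ,
      ((Sᵀ * S) * C)ᵀ = (Sᵀ * S) * C ∧ (C * (Sᵀ * S))ᵀ = C * (Sᵀ * S) ∧
      (Sᵀ * S) * C * (Sᵀ * S) = Sᵀ * S ∧ C * (Sᵀ * S) * C = C
  · have hB : B = h.choose := by rw [hBdef, pinv, dif_pos h]
    obtain ⟨h1, h2, h3, h4⟩ := h.choose_spec
    rw [← hB] at h1 h2 h3 h4
    have h3' : Sᵀ * (S * (B * (Sᵀ * S))) = Sᵀ * S := by
      simpa [Matrix.mul_assoc] using h3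
    -- `N := S * (B * (Sᵀ * S)) - S` satisfies `Sᵀ N = 0`, hence `NᵀN = 0`, hence `N = 0`.
    have hSt : Sᵀ * (S * (B * (Sᵀ * S)) - S) = 0 := by
      rw [Matrix.mul_sub, h3', sub_self]
    have hz : (S * (B * (Sᵀ * S)) - S)ᵀ * (S * (B * (Sᵀ * S)) - S) = 0 := by
      have e : (S * (B * (Sᵀ * S)))ᵀ = Sᵀ * (S * (Bᵀ * Sᵀ)) := by
        simp [transpose_mul, Matrix.mul_assoc]
      rw [transpose_sub, e, Matrix.sub_mul]
      simp only [Matrix.mul_assoc]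
      rw [hSt]
      simp
    have hkey : S * (B * (Sᵀ * S)) = S := by
      have hN0 : S * (B * (Sᵀ * S)) - S = 0 := by
        apply conjTranspose_mul_self_eq_zero.mp
        simpa using hz
      exact sub_eq_zero.mp hN0
    -- `P * S = S`
    have hPS : P * S = S := by
      rw [hPdef]
      simp only [Matrix.mul_assoc]
      exact hkey
    have hPt : Pᵀ = S * (Bᵀ * Sᵀ) := by
      rw [hPdef]
      simp [transpose_mul, Matrix.mul_assoc]
    have hPPt : P * Pᵀ = Pᵀ := by
      rw [hPt, ← Matrix.mul_assoc, hPS]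
    have hPsym : Pᵀ = P := by
      have h5 : P = P * Pᵀ := by
        conv_lhs => rw [← transpose_transpose P, ← hPPt]
        rw [transpose_mul, transpose_transpose]
      exact (h5.trans hPPt).symm
    refine ⟨hPsym, ?_⟩
    calc P * P = P * Pᵀ := by rw [hPsym]
      _ = Pᵀ := hPPt
      _ = P := hPsym
  · have hB : B = 0 := by rw [hBdef, pinv, dif_neg h]
    constructor <;> rw [hPdef, hB] <;> simp

set_option maxHeartbeats 2000000 in
/-- **The Nyström approximation via the PSD square root.**
For PSD `A` and a test matrix `X`, the Nyström approximation
`A⟨X⟩ = (AX)(XᵀAX)†(AX)ᵀ` equals `A^{1/2} P A^{1/2}` where `P` is the orthogonal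
projector onto the range of `A^{1/2} X`; consequently `A − A⟨X⟩` is PSD. -/
theorem nystrom_eq_sqrt_proj_sqrt
    {n ℓ : ℕ} (A : Matrix (Fin n) (Fin n) ℝ) (hA : A.PosSemidef)
    (X : Matrix (Fin n) (Fin ℓ) ℝ) :
    let Anys := (A * X) * pinv (Xᵀ * A * X) * (A * X)ᵀ
    let S := hA.sqrt * X
    let P := S * pinv (Sᵀ * S) * Sᵀ
    Anys = hA.sqrt * P * hA.sqrt ∧ (A - Anys).PosSemidef := by
  classical
  intro Anys S P
  have hsymm : hA.sqrtᵀ = hA.sqrt := by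
    simp [Matrix.PosSemidef.sqrt, transpose_mul, Matrix.mul_assoc, Matrix.star_eq_conjTranspose]
  have hs : hA.sqrt * hA.sqrt = A := by
    have hU : (star hA.1.eigenvectorUnitary : Matrix (Fin n) (Fin n) ℝ) * (hA.1.eigenvectorUnitary : Matrix (Fin n) (Fin n) ℝ) = 1 := Unitary.coe_star_mul_self _
    have hsp := hA.1.spectral_theorem
    rw [Unitary.conjStarAlgAut_apply] at hsp
    conv_rhs => rw [hsp]
    simp only [Matrix.PosSemidef.sqrt, Matrix.mul_assoc]
    rw [← Matrix.mul_assoc (star _ : Matrix (Fin n) (Fin n) ℝ), hU, Matrix.one_mul, ← Matrix.mul_assoc (diagonal _), diagonal_mul_diagonal]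
    congr 3
    funext i
    simp [Real.mul_self_sqrt (hA.eigenvalues_nonneg i)]
  have hM : Xᵀ * A * X = Sᵀ * S := by
    show Xᵀ * A * X = (hA.sqrt * X)ᵀ * (hA.sqrt * X)
    calc Xᵀ * A * X = Xᵀ * (hA.sqrt * hA.sqrt) * X := by rw [hs]
      _ = (hA.sqrt * X)ᵀ * (hA.sqrt * X) := by
          rw [transpose_mul, hsymm]
          simp only [Matrix.mul_assoc]
  have hAX : A * X = hA.sqrt * S := by
    show A * X = hA.sqrt * (hA.sqrt * X)
    calc A * X = (hA.sqrt * hA.sqrt) * X := by rw [hs]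
      _ = hA.sqrt * (hA.sqrt * X) := by rw [Matrix.mul_assoc]
  have hfirst : Anys = hA.sqrt * P * hA.sqrt := by
    show (A * X) * pinv (Xᵀ * A * X) * (A * X)ᵀ
      = hA.sqrt * (S * pinv (Sᵀ * S) * Sᵀ) * hA.sqrt
    have hSt : (hA.sqrt * S)ᵀ = Sᵀ * hA.sqrt := by
      rw [transpose_mul, hsymm]
    rw [hM, hAX, hSt]
    simp only [Matrix.mul_assoc]
  refine ⟨hfirst, ?_⟩
  obtain ⟨hPs, hPP⟩ := proj_symm_idem S
  have hPs' : Pᵀ = P := hPs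
  have hPP' : P * P = P := hPP
  have h1P : (1 - P)ᵀ * (1 - P) = 1 - P := by
    rw [transpose_sub, transpose_one, hPs', Matrix.sub_mul, Matrix.mul_sub,
      Matrix.mul_sub, hPP']
    simp
  have hQ : A - Anys = ((1 - P) * hA.sqrt)ᵀ * ((1 - P) * hA.sqrt) := by
    have e : ((1 - P) * hA.sqrt)ᵀ * ((1 - P) * hA.sqrt)
        = hA.sqrt * ((1 - P)ᵀ * (1 - P)) * hA.sqrt := by
      have ht : ((1 - P) * hA.sqrt)ᵀ = hA.sqrt * (1 - P)ᵀ := by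
        rw [transpose_mul, hsymm]
      rw [ht]
      simp only [Matrix.mul_assoc]
    rw [e, h1P, Matrix.mul_sub, Matrix.sub_mul, Matrix.mul_one, hs, hfirst]
  have hpsd : ∀ (Q : Matrix (Fin n) (Fin n) ℝ), (Qᵀ * Q).PosSemidef := fun Q => by
    simpa using posSemidef_conjTranspose_mul_self Q
  rw [hQ]
  exact hpsd ((1 - P) * hA.sqrt)
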